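/- No weak expander has property A. -/

import Mathlib

/-!
Formalization of statements from "Ghostbusting and property A" (Roe–Willett).
`L2 X` is ℓ²(X) with complex coefficients, `diracDelta x` the Dirac basis vector δ_x,
`matrixEntry T x y = ⟨δ_x, T δ_y⟩`.
-/

noncomputable section

open Metric Set

/-- ℓ²(X) with complex coefficients. -/
abbrev L2 (X : Type*) := lp (fun _ : X => ℂ) 2

/-- The Dirac mass δ_x ∈ ℓ²(X). -/
def diracDelta {X : Type*} (x : X) : L2 X :=
  letI := Classical.decEq X
  lp.single 2 x 1

/-- The matrix entry T_{xy} = ⟨δ_x, T δ_y⟩ of a bounded operator on ℓ²(X). -/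
def matrixEntry {X : Type*} (T : L2 X →L[ℂ] L2 X) (x y : X) : ℂ :=
  inner ℂ (diracDelta x) (T (diracDelta y))

/-- A metric space has bounded geometry if for each `R > 0` there is a uniform
bound on the cardinality of all balls of radius `R`. -/
def BoundedGeometry (X : Type*) [MetricSpace X] : Prop :=
  ∀ R : ℝ, 0 < R → ∃ N : ℕ, ∀ x : X,
    (Metric.closedBall x R).Finite ∧ (Metric.closedBall x R).ncard ≤ N

/-- `T` has propagation at most `R`: the matrix entries vanish whenever `d(x,y) > R`.
(`T ∈ ℂ_R[X]` in the notation of the paper.) -/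
def HasPropagationLE {X : Type*} [MetricSpace X] (T : L2 X →L[ℂ] L2 X) (R : ℝ) : Prop :=
  ∀ x y : X, R < dist x y → matrixEntry T x y = 0

/-- The uniform Roe algebra C*_u(X): the operator-norm closure of the set of
finite propagation operators. -/
def UniformRoeAlgebra (X : Type*) [MetricSpace X] : Set (L2 X →L[ℂ] L2 X) :=
  closure {T | ∃ R : ℝ, 0 ≤ R ∧ HasPropagationLE T R}

/-- `T` is a ghost: its matrix entries tend to 0 at infinity, i.e. for every `ε > 0`
all entries with at least one index outside some finite set have modulus `< ε`. -/
def IsGhost {X : Type*} [MetricSpace X] (T : L2 X →L[ℂ] L2 X) : Prop :=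
  ∀ ε : ℝ, 0 < ε → ∃ F : Finset X, ∀ x y : X, (x ∉ F ∨ y ∉ F) → ‖matrixEntry T x y‖ < ε

/-- A positive definite kernel on `X × X`. -/
def IsPosDefKernel {X : Type*} (k : X → X → ℝ) : Prop :=
  ∀ (s : Finset X) (c : X → ℝ), 0 ≤ ∑ x ∈ s, ∑ y ∈ s, c x * c y * k x y

/-- Property A, in the formulation via positive definite kernels:
there is a sequence of positive definite kernels of controlled support converging
to 1 uniformly on controlled sets. -/
def PropertyA (X : Type*) [MetricSpace X] : Prop :=
  ∃ k : ℕ → X → X → ℝ,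
    (∀ n, IsPosDefKernel (k n)) ∧
    (∀ n, ∃ r : ℝ, ∀ x y : X, r < dist x y → k n x y = 0) ∧
    (∀ s : ℝ, 0 < s → ∀ ε : ℝ, 0 < ε → ∃ N : ℕ, ∀ n : ℕ, N < n → ∀ x y : X,
      dist x y < s → 1 - ε ≤ k n x y ∧ k n x y ≤ 1)

/-- A presentation of `X` as the disjoint union `⊔ₙ Xₙ` of a sequence of nonempty
finite pieces, with `d(Xₙ, Xₘ) > diam Xₙ + diam Xₘ` for `n ≠ m`. -/
structure BoxSpaceStructure (X : Type*) [MetricSpace X] where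
  piece : ℕ → Set X
  nonempty : ∀ n, (piece n).Nonempty
  finite : ∀ n, (piece n).Finite
  pairwise_disjoint : ∀ m n, m ≠ n → Disjoint (piece m) (piece n)
  covers : ∀ x : X, ∃ n, x ∈ piece n
  separated : ∀ m n, m ≠ n → ∀ x ∈ piece m, ∀ y ∈ piece n,
    Metric.diam (piece m) + Metric.diam (piece n) < dist x y

/-- `X = ⊔ₙ Xₙ` is a weak expander: there are `c, R > 0` such that for every `S > 0`,
for all sufficiently large `n`, every `φ : Xₙ → ℝ` supported in a ball of radius `S`
satisfies `Σ_{(x,y) ∈ Eₙ^R} |φ(x) - φ(y)| ≥ c Σ_{x ∈ Xₙ} |φ(x)|`. -/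
def IsWeakExpander {X : Type*} [MetricSpace X] (B : BoxSpaceStructure X) : Prop :=
  ∃ c : ℝ, 0 < c ∧ ∃ R : ℝ, 0 < R ∧ ∀ S : ℝ, 0 < S → ∃ N : ℕ, ∀ n, N ≤ n →
    ∀ φ : X → ℝ, Function.support φ ⊆ B.piece n →
      (∃ z : X, Function.support φ ⊆ Metric.closedBall z S) →
      c * (∑' x : B.piece n, |φ x|) ≤
        ∑' p : {q : X × X // q.1 ∈ B.piece n ∧ q.2 ∈ B.piece n ∧ dist q.1 q.2 ≤ R},
          |φ p.1.1 - φ p.1.2|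

section Helpers

open Polynomial

lemma spec_main {ι : Type*} [Fintype ι] (T : EuclideanSpace ℝ ι →ₗ[ℝ] EuclideanSpace ℝ ι)
    (hT : T.IsSymmetric) :
    ∃ (n : ℕ) (μ : Fin n → ℝ) (W : EuclideanSpace ℝ ι → Fin n → ℝ),
      (∀ i, ∃ v : EuclideanSpace ℝ ι, ‖v‖ = 1 ∧ (inner ℝ v (T v) : ℝ) = μ i) ∧
      (∀ u i, 0 ≤ W u i) ∧
      (∀ u : EuclideanSpace ℝ ι, ‖u‖^2 = ∑ i, W u i) ∧
      (∀ u : EuclideanSpace ℝ ι, (inner ℝ u (T u) : ℝ) = ∑ i, μ i * W u i) ∧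
      (∀ (p : Polynomial ℝ) (u : EuclideanSpace ℝ ι),
        ‖(Polynomial.aeval T p) u‖^2 = ∑ i, (p.eval (μ i))^2 * W u i) := by
  have hn' : Module.finrank ℝ (EuclideanSpace ℝ ι) = Module.finrank ℝ (EuclideanSpace ℝ ι) := rfl
  set n := Module.finrank ℝ (EuclideanSpace ℝ ι)
  set b := hT.eigenvectorBasis hn' with hb
  set μ := hT.eigenvalues hn' with hμ
  have h1 : ∀ (v : EuclideanSpace ℝ ι) (i : Fin n), b.repr (T v) i = μ i * b.repr v i :=
    fun v i => hT.eigenvectorBasis_apply_self_apply hn' v i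
  have h3 : ∀ (u : EuclideanSpace ℝ ι), ‖u‖^2 = ∑ i, (b.repr u i)^2 := by
    intro u
    rw [← b.repr.norm_map u, EuclideanSpace.norm_eq, Real.sq_sqrt (by positivity)]
    simp [sq_abs]
  have h4 : ∀ (u v : EuclideanSpace ℝ ι), (inner ℝ u v : ℝ) = ∑ i, (b.repr u i) * (b.repr v i) := by
    intro u v
    rw [← b.repr.inner_map_map u v, PiLp.inner_apply]
    simp [RCLike.inner_apply, mul_comm]
  have hpow : ∀ (j : ℕ) (u : EuclideanSpace ℝ ι) (i : Fin n),
      b.repr ((T^j) u) i = (μ i)^j * b.repr u i := by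
    intro j
    induction j with
    | zero => intro u i; simp
    | succ j ih =>
      intro u i
      rw [pow_succ, Module.End.mul_apply, ih, h1, pow_succ]
      ring
  have haev : ∀ (p : Polynomial ℝ) (u : EuclideanSpace ℝ ι) (i : Fin n),
      b.repr ((Polynomial.aeval T p) u) i = p.eval (μ i) * b.repr u i := by
    intro p
    induction p using Polynomial.induction_on' with
    | add p q hp hq =>
      intro u i
      simp only [map_add, LinearMap.add_apply, eval_add, PiLp.add_apply, hp, hq]
      ring
    | monomial m a =>
      intro u i
      rw [Polynomial.aeval_monomial, Polynomial.eval_monomial]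
      have : ((algebraMap ℝ (Module.End ℝ (EuclideanSpace ℝ ι))) a * T ^ m) u
          = a • ((T^m) u) := by
        simp [Module.End.mul_apply, Module.algebraMap_end_apply]
      rw [this, map_smul]
      simp only [PiLp.smul_apply, smul_eq_mul]
      rw [hpow]; ring
  refine ⟨n, μ, fun u i => (b.repr u i)^2, ?_, fun u i => sq_nonneg _, h3, ?_, ?_⟩
  · intro i
    refine ⟨b i, b.orthonormal.1 i, ?_⟩
    rw [h4]
    have : ∀ j, b.repr (b i) j = if j = i then 1 else 0 := by
      intro j; rw [b.repr_self]; simp [EuclideanSpace.single_apply]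
    simp only [this, h1]
    rw [Finset.sum_eq_single i] <;> simp +contextual
  · intro u
    rw [h4]
    congr 1; funext i; rw [h1]; ring
  · intro p u
    rw [h3]
    congr 1; funext i; rw [haev]; ring

lemma pow_isSymm {E : Type*} [NormedAddCommGroup E] [InnerProductSpace ℝ E]
    (T : E →ₗ[ℝ] E) (hT : T.IsSymmetric) (j : ℕ) : (T^j).IsSymmetric := by
  induction j with
  | zero => intro x y; simp
  | succ j ih =>
    intro x y
    rw [pow_succ, Module.End.mul_apply, Module.End.mul_apply, ih, hT, ← Module.End.mul_apply,
      ← Module.End.mul_apply, ← pow_succ', pow_succ]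

lemma aeval_isSymm {E : Type*} [NormedAddCommGroup E] [InnerProductSpace ℝ E]
    (T : E →ₗ[ℝ] E) (hT : T.IsSymmetric) (p : Polynomial ℝ) :
    (Polynomial.aeval T p).IsSymmetric := by
  induction p using Polynomial.induction_on' with
  | add p q hp hq =>
    intro x y
    simp only [map_add, LinearMap.add_apply, inner_add_left, inner_add_right, hp x y, hq x y]
  | monomial m a =>
    intro x y
    rw [Polynomial.aeval_monomial]
    have h : ∀ z, ((algebraMap ℝ (Module.End ℝ E)) a * T ^ m) z = a • ((T^m) z) := by
      intro z; simp [Module.End.mul_apply, Module.algebraMap_end_apply]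
    rw [h, h, inner_smul_left, inner_smul_right, pow_isSymm T hT m x y]
    simp

def kerOp {ι : Type*} [Fintype ι] (K : ι → ι → ℝ) :
    EuclideanSpace ℝ ι →ₗ[ℝ] EuclideanSpace ℝ ι where
  toFun u := WithLp.toLp 2 (fun x => ∑ y, K x y * u y)
  map_add' u v := by
    ext x
    simp [PiLp.add_apply, mul_add, Finset.sum_add_distrib]
  map_smul' a u := by
    ext x
    simp [PiLp.smul_apply, Finset.mul_sum, smul_eq_mul]
    congr 1; funext y; ring

lemma kerOp_apply {ι : Type*} [Fintype ι] (K : ι → ι → ℝ) (u : EuclideanSpace ℝ ι) (x : ι) :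
    kerOp K u x = ∑ y, K x y * u y := rfl

lemma kerOp_symm {ι : Type*} [Fintype ι] (K : ι → ι → ℝ)
    (hK : ∀ x y, K x y = K y x) : (kerOp K).IsSymmetric := by
  intro u v
  simp only [PiLp.inner_apply, RCLike.inner_apply, starRingEnd_apply, star_trivial]
  simp only [kerOp_apply, Finset.sum_mul, Finset.mul_sum]
  rw [Finset.sum_comm]
  congr 1; funext x; congr 1; funext y
  rw [hK x y]; ring

lemma inner_kerOp {ι : Type*} [Fintype ι] (K : ι → ι → ℝ) (u : EuclideanSpace ℝ ι) :
    (inner ℝ u (kerOp K u) : ℝ) = ∑ x, ∑ y, K x y * u x * u y := by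
  simp only [PiLp.inner_apply, RCLike.inner_apply, starRingEnd_apply, star_trivial, kerOp_apply,
    Finset.mul_sum, Finset.sum_mul]
  congr 1; funext x; congr 1; funext y; ring

lemma kerOp_single {ι : Type*} [Fintype ι] [DecidableEq ι] (K : ι → ι → ℝ) (y : ι) (x : ι) :
    kerOp K (EuclideanSpace.single y (1:ℝ)) x = K x y := by
  rw [kerOp_apply]
  rw [Finset.sum_eq_single y] <;> simp +contextual [EuclideanSpace.single_apply]

lemma inner_single_left' {ι : Type*} [Fintype ι] [DecidableEq ι] (x : ι) (w : EuclideanSpace ℝ ι) :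
    (inner ℝ (EuclideanSpace.single x (1:ℝ)) w : ℝ) = w x := by
  simp [EuclideanSpace.inner_single_left]

lemma norm_sq_eq {ι : Type*} [Fintype ι] (u : EuclideanSpace ℝ ι) :
    ‖u‖^2 = ∑ x, (u x)^2 := by
  rw [EuclideanSpace.norm_eq, Real.sq_sqrt (by positivity)]
  simp [sq_abs]

lemma kerOp_pow_prop {ι : Type*} [Fintype ι] [DecidableEq ι] (K : ι → ι → ℝ)
    (d : ι → ι → ℝ) (r : ℝ) (hr : 0 ≤ r)
    (hd0 : ∀ x, d x x = 0) (htri : ∀ x y z, d x z ≤ d x y + d y z)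
    (hK0 : ∀ x y, r < d x y → K x y = 0) :
    ∀ (j : ℕ) (z x : ι), (j : ℝ) * r < d x z →
      (((kerOp K)^j) (EuclideanSpace.single z (1:ℝ))) x = 0 := by
  intro j
  induction j with
  | zero =>
    intro z x h
    simp only [Nat.cast_zero, zero_mul] at h
    have hxz : x ≠ z := by rintro rfl; rw [hd0] at h; linarith
    simp [EuclideanSpace.single_apply, hxz]
  | succ j ih =>
    intro z x h
    rw [pow_succ', Module.End.mul_apply, kerOp_apply]
    apply Finset.sum_eq_zero
    intro y _
    by_cases hxy : r < d x y
    · rw [hK0 x y hxy, zero_mul]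
    · push_neg at hxy
      have : (j : ℝ) * r < d y z := by
        have := htri x y z
        push_cast at h ⊢
        nlinarith
      rw [ih z y this, mul_zero]

lemma kerOp_aeval_prop {ι : Type*} [Fintype ι] [DecidableEq ι] (K : ι → ι → ℝ)
    (d : ι → ι → ℝ) (r : ℝ) (hr : 0 ≤ r)
    (hd0 : ∀ x, d x x = 0) (htri : ∀ x y z, d x z ≤ d x y + d y z)
    (hK0 : ∀ x y, r < d x y → K x y = 0) (q : Polynomial ℝ) :
    ∀ (z x : ι), (q.natDegree : ℝ) * r < d x z →
      ((Polynomial.aeval (kerOp K) q) (EuclideanSpace.single z (1:ℝ))) x = 0 := by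
  intro z x h
  rw [Polynomial.aeval_eq_sum_range]
  rw [LinearMap.sum_apply]
  have hterm : ∀ i ∈ Finset.range (q.natDegree + 1),
      ((q.coeff i • (kerOp K)^i) (EuclideanSpace.single z (1:ℝ))) x = 0 := by
    intro i hi
    rw [LinearMap.smul_apply, PiLp.smul_apply, smul_eq_mul]
    have hi' : (i:ℝ) * r ≤ (q.natDegree : ℝ) * r := by
      have h1 : i ≤ q.natDegree := Nat.lt_succ_iff.mp (Finset.mem_range.mp hi)
      have h2 : (i:ℝ) ≤ q.natDegree := by exact_mod_cast h1
      nlinarith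
    rw [kerOp_pow_prop K d r hr hd0 htri hK0 i z x (lt_of_le_of_lt hi' h), mul_zero]
  calc (∑ i ∈ Finset.range (q.natDegree + 1), (q.coeff i • (kerOp K)^i)
          (EuclideanSpace.single z (1:ℝ))) x
      = ∑ i ∈ Finset.range (q.natDegree + 1), ((q.coeff i • (kerOp K)^i)
          (EuclideanSpace.single z (1:ℝ))) x := by
        rw [WithLp.ofLp_sum]; exact Finset.sum_apply x _ _
    _ = 0 := Finset.sum_eq_zero hterm

end Helpers

set_option maxHeartbeats 2000000 in
/-- No weak expander has property A. -/
theorem weak_expander_not_propertyA (X : Type*) [MetricSpace X] (hbg : BoundedGeometry X)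
    (B : BoxSpaceStructure X) (hwe : IsWeakExpander B) : ¬ PropertyA X := by
  classical
  rintro ⟨k, hpd, hprop, hclose⟩
  obtain ⟨c, hc, R, hR, hexp⟩ := hwe
  obtain ⟨MR, hMR⟩ := hbg R hR
  set ε : ℝ := min ((c / (20 * ((MR : ℝ) + 1)))^2) (1/4) with hεdef
  have hMR1 : (0:ℝ) < 20 * ((MR : ℝ) + 1) := by positivity
  have hε : 0 < ε := lt_min (by positivity) (by norm_num)
  have hε4 : ε ≤ 1/4 := min_le_right _ _
  have hsqε : Real.sqrt ε ≤ c / (20 * ((MR : ℝ) + 1)) := by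
    calc Real.sqrt ε ≤ Real.sqrt ((c / (20 * ((MR : ℝ)+1)))^2) :=
          Real.sqrt_le_sqrt (min_le_left _ _)
    _ = c / (20*((MR : ℝ)+1)) := Real.sqrt_sq (by positivity)
  obtain ⟨N, hN⟩ := hclose (R+1) (by linarith) ε hε
  have hk : ∀ x y : X, dist x y < R+1 → 1 - ε ≤ k (N+1) x y ∧ k (N+1) x y ≤ 1 :=
    fun x y h => hN (N+1) (Nat.lt_succ_self N) x y h
  obtain ⟨r0, hr0⟩ := hprop (N+1)
  set r : ℝ := max r0 (R+1) with hrdef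
  have hrR : R + 1 ≤ r := le_max_right _ _
  have hrpos : 0 < r := by linarith
  obtain ⟨Λ, hΛ⟩ := hbg r hrpos
  -- the symmetrized kernel
  set K0 : X → X → ℝ := fun x y => (k (N+1) x y + k (N+1) y x) / 2 with hK0def
  have hK0symm : ∀ x y, K0 x y = K0 y x := by
    intro x y; simp only [hK0def]; ring
  have hK0prop : ∀ x y, r < dist x y → K0 x y = 0 := by
    intro x y h
    have h1 : r0 < dist x y := lt_of_le_of_lt (le_max_left _ _) h
    have h2 : r0 < dist y x := by rwa [dist_comm]
    simp only [hK0def, hr0 x y h1, hr0 y x h2]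
    norm_num
  have hK0close : ∀ x y, dist x y < R+1 → 1 - ε ≤ K0 x y ∧ K0 x y ≤ 1 := by
    intro x y h
    have h2 : dist y x < R+1 := by rwa [dist_comm]
    obtain ⟨a1, a2⟩ := hk x y h
    obtain ⟨b1, b2⟩ := hk y x h2
    constructor <;> simp only [hK0def] <;> linarith
  have hK0diag : ∀ x : X, 1 - ε ≤ K0 x x ∧ K0 x x ≤ 1 := by
    intro x
    exact hK0close x x (by rw [dist_self]; linarith)
  have hK0bdd : ∀ x y, |K0 x y| ≤ 1 := by
    intro x y
    rcases eq_or_ne x y with rfl | hxy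
    · obtain ⟨h1, h2⟩ := hK0diag x
      rw [abs_le]; constructor <;> linarith
    · have hyx : y ≠ x := hxy.symm
      have hdx := (hk x x (by rw [dist_self]; linarith)).2
      have hdy := (hk y y (by rw [dist_self]; linarith)).2
      have hplus := hpd (N+1) {x, y} (fun w => if w = x then 1 else if w = y then 1 else 0)
      have hminus := hpd (N+1) {x, y} (fun w => if w = x then 1 else if w = y then -1 else 0)
      simp only [Finset.sum_pair hxy] at hplus hminus
      simp [hyx] at hplus hminus
      rw [abs_le]
      constructor <;> simp only [hK0def] <;> nlinarith [hplus, hminus]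
  -- polynomial approximation of sqrt
  set sΛ : ℝ := Real.sqrt (Λ : ℝ) with hsΛdef
  have hsΛ0 : 0 ≤ sΛ := Real.sqrt_nonneg _
  set θ : ℝ := min ε (ε / (2*sΛ + 1)) with hθdef
  have hθpos : 0 < θ := lt_min hε (by positivity)
  have hθε : θ ≤ ε := min_le_left _ _
  have hθΛ : θ * (2*sΛ + 1) ≤ ε := by
    have h1 : θ ≤ ε / (2*sΛ+1) := min_le_right _ _
    rw [le_div_iff₀ (by positivity)] at h1
    exact h1
  obtain ⟨q, hq⟩ := exists_polynomial_near_of_continuousOn 0 (Λ : ℝ) Real.sqrt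
    (Real.continuous_sqrt.continuousOn) θ hθpos
  set D := q.natDegree with hDdef
  set S : ℝ := (D : ℝ) * r + 1 with hSdef
  have hS : 0 < S := by positivity
  obtain ⟨NE, hNe⟩ := hexp S hS
  haveI hPfin : Fintype ↥(B.piece NE) := (B.finite NE).fintype
  haveI hPne : Nonempty ↥(B.piece NE) := (B.nonempty NE).to_subtype
  set KP : ↥(B.piece NE) → ↥(B.piece NE) → ℝ := fun x y => K0 x.1 y.1 with hKPdef
  set T := kerOp KP with hTdef
  have hTsymm : T.IsSymmetric := kerOp_symm KP (fun x y => hK0symm _ _)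
  -- positivity of the quadratic form
  have hpos : ∀ u : EuclideanSpace ℝ ↥(B.piece NE), 0 ≤ (inner ℝ u (T u) : ℝ) := by
    intro u
    rw [hTdef, inner_kerOp]
    set cc : X → ℝ := fun w => if hw : w ∈ B.piece NE then u ⟨w, hw⟩ else 0 with hccdef
    have h0 := hpd (N+1) (B.finite NE).toFinset cc
    have hmem : ∀ w : X, w ∈ (B.finite NE).toFinset ↔ w ∈ B.piece NE :=
      fun w => Set.Finite.mem_toFinset _
    have h0' : (0:ℝ) ≤ ∑ x : ↥(B.piece NE), ∑ y : ↥(B.piece NE),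
        u x * u y * k (N+1) x.1 y.1 := by
      calc (0:ℝ) ≤ ∑ x ∈ (B.finite NE).toFinset, ∑ y ∈ (B.finite NE).toFinset,
            cc x * cc y * k (N+1) x y := h0
        _ = ∑ x : ↥(B.piece NE), ∑ y ∈ (B.finite NE).toFinset,
            cc x.1 * cc y * k (N+1) x.1 y := Finset.sum_subtype _ hmem _
        _ = ∑ x : ↥(B.piece NE), ∑ y : ↥(B.piece NE),
            cc x.1 * cc y.1 * k (N+1) x.1 y.1 :=
          Finset.sum_congr rfl (fun x _ => Finset.sum_subtype _ hmem _)
        _ = ∑ x : ↥(B.piece NE), ∑ y : ↥(B.piece NE), u x * u y * k (N+1) x.1 y.1 := by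
          apply Finset.sum_congr rfl; intro x _
          apply Finset.sum_congr rfl; intro y _
          have hx : cc x.1 = u x := by
            simp only [hccdef]; rw [dif_pos x.2]
          have hy : cc y.1 = u y := by
            simp only [hccdef]; rw [dif_pos y.2]
          rw [hx, hy]
    have hswap : ∑ x : ↥(B.piece NE), ∑ y : ↥(B.piece NE), u x * u y * k (N+1) y.1 x.1
        = ∑ x : ↥(B.piece NE), ∑ y : ↥(B.piece NE), u x * u y * k (N+1) x.1 y.1 := by
      rw [Finset.sum_comm]
      apply Finset.sum_congr rfl; intro x _
      apply Finset.sum_congr rfl; intro y _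
      ring
    have hexpand : ∀ (x y : ↥(B.piece NE)), KP x y * u x * u y
        = (u x * u y * k (N+1) x.1 y.1 + u x * u y * k (N+1) y.1 x.1)/2 := by
      intro x y; simp only [hKPdef, hK0def]; ring
    calc (0:ℝ) ≤ ∑ x : ↥(B.piece NE), ∑ y : ↥(B.piece NE), u x * u y * k (N+1) x.1 y.1 := h0'
      _ = ∑ x : ↥(B.piece NE), ∑ y : ↥(B.piece NE), KP x y * u x * u y := by
        simp only [hexpand]
        simp only [← Finset.sum_div, Finset.sum_add_distrib]
        rw [hswap]; ring
  -- counting points in balls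
  have hcount : ∀ (x : X) (ρ : ℝ) (Nρ : ℕ),
      (∀ x' : X, (Metric.closedBall x' ρ).Finite ∧ (Metric.closedBall x' ρ).ncard ≤ Nρ) →
      (Finset.univ.filter (fun y : ↥(B.piece NE) => dist x y.1 ≤ ρ)).card ≤ Nρ := by
    intro x ρ Nρ hB
    obtain ⟨hfin, hcard⟩ := hB x
    have h1 : (Finset.univ.filter (fun y : ↥(B.piece NE) => dist x y.1 ≤ ρ)).card
        = ((Finset.univ.filter (fun y : ↥(B.piece NE) => dist x y.1 ≤ ρ)).image
            Subtype.val).card :=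
      (Finset.card_image_of_injective _ Subtype.val_injective).symm
    rw [h1]
    have h2 : ((Finset.univ.filter (fun y : ↥(B.piece NE) => dist x y.1 ≤ ρ)).image Subtype.val)
        ⊆ hfin.toFinset := by
      intro w hw
      simp only [Finset.mem_image, Finset.mem_filter] at hw
      obtain ⟨y, ⟨_, hy⟩, rfl⟩ := hw
      rw [Set.Finite.mem_toFinset]
      exact Metric.mem_closedBall.mpr (by rwa [dist_comm])
    calc _ ≤ hfin.toFinset.card := Finset.card_le_card h2
      _ = (Metric.closedBall x ρ).ncard := (Set.ncard_eq_toFinset_card _ hfin).symm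
      _ ≤ Nρ := hcard
  -- upper bound of the quadratic form
  have hbound : ∀ u : EuclideanSpace ℝ ↥(B.piece NE), (inner ℝ u (T u) : ℝ) ≤ (Λ:ℝ) * ‖u‖^2 := by
    intro u
    rw [hTdef, inner_kerOp]
    have step1 : ∑ x : ↥(B.piece NE), ∑ y : ↥(B.piece NE), KP x y * u x * u y
        ≤ ∑ x : ↥(B.piece NE), ∑ y : ↥(B.piece NE),
            ((if dist x.1 y.1 ≤ r then (u x)^2/2 else 0)
              + (if dist x.1 y.1 ≤ r then (u y)^2/2 else 0)) := by
      apply Finset.sum_le_sum; intro x _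
      apply Finset.sum_le_sum; intro y _
      by_cases hd : dist x.1 y.1 ≤ r
      · rw [if_pos hd, if_pos hd]
        have h1 : |KP x y| ≤ 1 := hK0bdd _ _
        calc KP x y * u x * u y ≤ |KP x y * u x * u y| := le_abs_self _
          _ = |KP x y| * |u x| * |u y| := by rw [abs_mul, abs_mul]
          _ ≤ 1 * |u x| * |u y| := by
            apply mul_le_mul_of_nonneg_right _ (abs_nonneg _)
            exact mul_le_mul_of_nonneg_right h1 (abs_nonneg _)
          _ = |u x| * |u y| := by ring
          _ ≤ (u x)^2/2 + (u y)^2/2 := by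
            nlinarith [sq_nonneg (|u x| - |u y|), sq_abs (u x), sq_abs (u y)]
      · rw [if_neg hd, if_neg hd]
        push_neg at hd
        have h0 : KP x y = 0 := by
          simp only [hKPdef]; exact hK0prop _ _ hd
        rw [h0]
        norm_num
    have sumA : ∀ (v : ↥(B.piece NE) → ℝ) (x : ↥(B.piece NE)),
        ∑ y : ↥(B.piece NE), (if dist x.1 y.1 ≤ r then (v x)^2/2 else 0)
        ≤ (v x)^2/2 * (Λ:ℝ) := by
      intro v x
      have he : ∑ y : ↥(B.piece NE), (if dist x.1 y.1 ≤ r then (v x)^2/2 else 0)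
          = ((Finset.univ.filter (fun y : ↥(B.piece NE) => dist x.1 y.1 ≤ r)).card : ℝ)
            * ((v x)^2/2) := by
        rw [Finset.sum_ite, Finset.sum_const, Finset.sum_const_zero, add_zero, nsmul_eq_mul]
      rw [he]
      have hc1 := hcount x.1 r Λ hΛ
      have hc2 : ((Finset.univ.filter
          (fun y : ↥(B.piece NE) => dist x.1 y.1 ≤ r)).card : ℝ) ≤ (Λ:ℝ) := by
        exact_mod_cast hc1
      nlinarith [sq_nonneg (v x)]
    have step2 : ∑ x : ↥(B.piece NE), ∑ y : ↥(B.piece NE),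
        ((if dist x.1 y.1 ≤ r then (u x)^2/2 else 0)
          + (if dist x.1 y.1 ≤ r then (u y)^2/2 else 0))
        ≤ (Λ:ℝ) * ‖u‖^2 := by
      have hA : ∑ x : ↥(B.piece NE), ∑ y : ↥(B.piece NE),
          (if dist x.1 y.1 ≤ r then (u x)^2/2 else 0)
          ≤ ∑ x : ↥(B.piece NE), (u x)^2/2 * (Λ:ℝ) :=
        Finset.sum_le_sum (fun x _ => sumA u x)
      have hB2 : ∑ x : ↥(B.piece NE), ∑ y : ↥(B.piece NE),
          (if dist x.1 y.1 ≤ r then (u y)^2/2 else 0)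
          ≤ ∑ y : ↥(B.piece NE), (u y)^2/2 * (Λ:ℝ) := by
        rw [Finset.sum_comm]
        apply Finset.sum_le_sum
        intro y _
        have he2 : ∀ x : ↥(B.piece NE), (if dist x.1 y.1 ≤ r then (u y)^2/2 else 0)
            = (if dist y.1 x.1 ≤ r then (u y)^2/2 else 0) := by
          intro x; rw [dist_comm]
        simp only [he2]
        exact sumA u y
      have hnorm : ‖u‖^2 = ∑ x : ↥(B.piece NE), (u x)^2 := norm_sq_eq u
      have hsplit : ∑ x : ↥(B.piece NE), ∑ y : ↥(B.piece NE),
          ((if dist x.1 y.1 ≤ r then (u x)^2/2 else 0)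
            + (if dist x.1 y.1 ≤ r then (u y)^2/2 else 0))
          = (∑ x : ↥(B.piece NE), ∑ y : ↥(B.piece NE),
              (if dist x.1 y.1 ≤ r then (u x)^2/2 else 0))
            + (∑ x : ↥(B.piece NE), ∑ y : ↥(B.piece NE),
              (if dist x.1 y.1 ≤ r then (u y)^2/2 else 0)) := by
        simp only [Finset.sum_add_distrib]
      rw [hsplit, hnorm]
      have hs1 : ∑ x : ↥(B.piece NE), (u x)^2/2 * (Λ:ℝ)
          = (∑ x : ↥(B.piece NE), (u x)^2) * ((Λ:ℝ)/2) := by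
        rw [Finset.sum_mul]
        apply Finset.sum_congr rfl; intro x _; ring
      rw [hs1] at hA hB2
      nlinarith [hA, hB2]
    exact le_trans step1 step2
  -- spectral decomposition
  obtain ⟨n, μ, W, hμv, hW0, hWnorm, hWinner, hWaev⟩ := spec_main T hTsymm
  have hμrange : ∀ i, 0 ≤ μ i ∧ μ i ≤ (Λ:ℝ) := by
    intro i
    obtain ⟨v, hv1, hv2⟩ := hμv i
    constructor
    · rw [← hv2]; exact hpos v
    · rw [← hv2]
      calc (inner ℝ v (T v) : ℝ) ≤ (Λ:ℝ) * ‖v‖^2 := hbound v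
        _ = (Λ:ℝ) := by rw [hv1]; ring
  -- pointwise polynomial estimates
  have hqub : ∀ t : ℝ, 0 ≤ t → t ≤ (Λ:ℝ) → (q.eval t)^2 ≤ 2*θ^2 + 2*t := by
    intro t h1 h2
    have h3 := abs_le.mp (le_of_lt (hq t ⟨h1, h2⟩))
    have h5 : Real.sqrt t ^ 2 = t := Real.sq_sqrt h1
    nlinarith [sq_nonneg (q.eval t - 2 * Real.sqrt t), h3.1, h3.2]
  have hqlb : ∀ t : ℝ, 0 ≤ t → t ≤ (Λ:ℝ) → t - ε ≤ (q.eval t)^2 := by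
    intro t h1 h2
    have h3 := abs_le.mp (le_of_lt (hq t ⟨h1, h2⟩))
    have h5 : Real.sqrt t ^ 2 = t := Real.sq_sqrt h1
    have h6 : Real.sqrt t ≤ sΛ := by
      rw [hsΛdef]; exact Real.sqrt_le_sqrt h2
    have h7 : 0 ≤ Real.sqrt t := Real.sqrt_nonneg t
    nlinarith [hθΛ, hθpos.le, sq_nonneg (q.eval t - Real.sqrt t),
      mul_le_mul_of_nonneg_right h6 hθpos.le,
      mul_le_mul_of_nonneg_left h3.1 h7]
  -- estimates on the operator M = q(T)
  have hup : ∀ u : EuclideanSpace ℝ ↥(B.piece NE),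
      ‖(Polynomial.aeval T q) u‖^2 ≤ 2*θ^2*‖u‖^2 + 2*(inner ℝ u (T u) : ℝ) := by
    intro u
    rw [hWaev q u, hWnorm u, hWinner u]
    calc ∑ i, (q.eval (μ i))^2 * W u i ≤ ∑ i, (2*θ^2 + 2*μ i) * W u i := by
          apply Finset.sum_le_sum; intro i _
          exact mul_le_mul_of_nonneg_right (hqub (μ i) (hμrange i).1 (hμrange i).2) (hW0 u i)
      _ = 2*θ^2*(∑ i, W u i) + 2*(∑ i, μ i * W u i) := by
          rw [Finset.mul_sum, Finset.mul_sum, ← Finset.sum_add_distrib]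
          apply Finset.sum_congr rfl; intro i _; ring
  have hlo : ∀ u : EuclideanSpace ℝ ↥(B.piece NE),
      (inner ℝ u (T u) : ℝ) - ε*‖u‖^2 ≤ ‖(Polynomial.aeval T q) u‖^2 := by
    intro u
    rw [hWaev q u, hWnorm u, hWinner u]
    calc (∑ i, μ i * W u i) - ε*(∑ i, W u i) = ∑ i, (μ i - ε) * W u i := by
          rw [Finset.mul_sum, ← Finset.sum_sub_distrib]
          apply Finset.sum_congr rfl; intro i _; ring
      _ ≤ ∑ i, (q.eval (μ i))^2 * W u i := by
          apply Finset.sum_le_sum; intro i _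
          apply mul_le_mul_of_nonneg_right _ (hW0 u i)
          have := hqlb (μ i) (hμrange i).1 (hμrange i).2
          linarith
  -- basis vectors
  set ee : ↥(B.piece NE) → EuclideanSpace ℝ ↥(B.piece NE) :=
    fun z => EuclideanSpace.single z (1:ℝ) with heedef
  have henorm : ∀ z, ‖ee z‖^2 = 1 := by
    intro z
    simp only [heedef]
    rw [EuclideanSpace.norm_single]
    norm_num
  have hinnerTe : ∀ a b : ↥(B.piece NE), (inner ℝ (ee a) (T (ee b)) : ℝ) = KP a b := by
    intro a b
    simp only [heedef]
    rw [inner_single_left']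
    rw [hTdef]
    exact kerOp_single KP b a
  have hMe_symm : ∀ z x : ↥(B.piece NE),
      (Polynomial.aeval T q) (ee z) x = (Polynomial.aeval T q) (ee x) z := by
    intro z x
    have hMsymm : (Polynomial.aeval T q).IsSymmetric := aeval_isSymm T hTsymm q
    have h1 : (Polynomial.aeval T q) (ee z) x
        = (inner ℝ (ee x) ((Polynomial.aeval T q) (ee z)) : ℝ) := by
      rw [heedef, inner_single_left']
    have h2 : (Polynomial.aeval T q) (ee x) z
        = (inner ℝ (ee z) ((Polynomial.aeval T q) (ee x)) : ℝ) := by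
      rw [heedef, inner_single_left']
    rw [h1, h2, ← hMsymm (ee x) (ee z), real_inner_comm]
  have hKPprop : ∀ a b : ↥(B.piece NE), r < dist a.1 b.1 → KP a b = 0 := by
    intro a b hab
    simp only [hKPdef]
    exact hK0prop _ _ hab
  have hpropM : ∀ z x : ↥(B.piece NE), (D:ℝ)*r < dist x.1 z.1 →
      (Polynomial.aeval T q) (ee z) x = 0 := by
    intro z x h
    exact kerOp_aeval_prop KP (fun a b => dist a.1 b.1) r hrpos.le
      (fun a => dist_self a.1) (fun a b c' => dist_triangle a.1 b.1 c'.1)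
      hKPprop q z x h
  -- edge estimates
  have hedge1 : ∀ x y : ↥(B.piece NE), dist x.1 y.1 ≤ R →
      ‖(Polynomial.aeval T q) (ee x) - (Polynomial.aeval T q) (ee y)‖^2 ≤ 8*ε := by
    intro x y hxy
    rw [← map_sub]
    have h1 := hup (ee x - ee y)
    have hn2 : ‖ee x - ee y‖^2 ≤ 4 := by
      have h2 : ‖ee x - ee y‖ ≤ 2 := by
        calc ‖ee x - ee y‖ ≤ ‖ee x‖ + ‖ee y‖ := norm_sub_le _ _
          _ = 2 := by
            simp only [heedef]
            rw [EuclideanSpace.norm_single, EuclideanSpace.norm_single]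
            norm_num
      nlinarith [norm_nonneg (ee x - ee y)]
    have hip : (inner ℝ (ee x - ee y) (T (ee x - ee y)) : ℝ)
        = KP x x - KP x y - KP y x + KP y y := by
      rw [map_sub, inner_sub_right, inner_sub_left, inner_sub_left]
      rw [hinnerTe, hinnerTe, hinnerTe, hinnerTe]
      ring
    have hKxy : 1 - ε ≤ KP x y ∧ KP x y ≤ 1 := by
      simp only [hKPdef]
      exact hK0close x.1 y.1 (lt_of_le_of_lt hxy (by linarith))
    have hKyx : 1 - ε ≤ KP y x ∧ KP y x ≤ 1 := by
      simp only [hKPdef]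
      refine hK0close y.1 x.1 ?_
      rw [dist_comm]
      exact lt_of_le_of_lt hxy (by linarith)
    have hKxx : KP x x ≤ 1 := by simp only [hKPdef]; exact (hK0diag x.1).2
    have hKyy : KP y y ≤ 1 := by simp only [hKPdef]; exact (hK0diag y.1).2
    have hip2 : (inner ℝ (ee x - ee y) (T (ee x - ee y)) : ℝ) ≤ 2*ε := by
      rw [hip]; linarith [hKxy.1, hKyx.1]
    have hθ2 : θ^2 ≤ ε/4 := by nlinarith [hθε, hθpos.le, hε4, hε.le]
    calc ‖(Polynomial.aeval T q) (ee x - ee y)‖^2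
        ≤ 2*θ^2*‖ee x - ee y‖^2 + 2*(inner ℝ (ee x - ee y) (T (ee x - ee y)) : ℝ) := h1
      _ ≤ 2*(ε/4)*4 + 2*(2*ε) := by nlinarith [sq_nonneg θ, hip2, sq_nonneg (‖ee x - ee y‖), hθ2, hn2]
      _ ≤ 8*ε := by linarith [hε.le]
  have hedge2 : ∀ x y : ↥(B.piece NE), dist x.1 y.1 ≤ R →
      ‖(Polynomial.aeval T q) (ee x) + (Polynomial.aeval T q) (ee y)‖^2 ≤ 9 := by
    intro x y hxy
    rw [← map_add]
    have h1 := hup (ee x + ee y)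
    have hn2 : ‖ee x + ee y‖^2 ≤ 4 := by
      have h2 : ‖ee x + ee y‖ ≤ 2 := by
        calc ‖ee x + ee y‖ ≤ ‖ee x‖ + ‖ee y‖ := norm_add_le _ _
          _ = 2 := by
            simp only [heedef]
            rw [EuclideanSpace.norm_single, EuclideanSpace.norm_single]
            norm_num
      nlinarith [norm_nonneg (ee x + ee y)]
    have hip : (inner ℝ (ee x + ee y) (T (ee x + ee y)) : ℝ)
        = KP x x + KP x y + KP y x + KP y y := by
      rw [map_add, inner_add_right, inner_add_left, inner_add_left]
      rw [hinnerTe, hinnerTe, hinnerTe, hinnerTe]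
      ring
    have hKxy : KP x y ≤ 1 := by
      simp only [hKPdef]
      exact (hK0close x.1 y.1 (lt_of_le_of_lt hxy (by linarith))).2
    have hKyx : KP y x ≤ 1 := by
      simp only [hKPdef]
      refine (hK0close y.1 x.1 ?_).2
      rw [dist_comm]
      exact lt_of_le_of_lt hxy (by linarith)
    have hKxx : KP x x ≤ 1 := by simp only [hKPdef]; exact (hK0diag x.1).2
    have hKyy : KP y y ≤ 1 := by simp only [hKPdef]; exact (hK0diag y.1).2
    have hip2 : (inner ℝ (ee x + ee y) (T (ee x + ee y)) : ℝ) ≤ 4 := by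
      rw [hip]; linarith
    have hθ2 : θ^2 ≤ 1/16 := by nlinarith [hθε, hθpos.le, hε4, hε.le]
    calc ‖(Polynomial.aeval T q) (ee x + ee y)‖^2
        ≤ 2*θ^2*‖ee x + ee y‖^2 + 2*(inner ℝ (ee x + ee y) (T (ee x + ee y)) : ℝ) := h1
      _ ≤ 2*(1/16)*4 + 2*4 := by nlinarith [sq_nonneg (‖ee x + ee y‖), hθ2, hn2, hip2, sq_nonneg θ]
      _ ≤ 9 := by norm_num
  -- mass estimate
  have hmass : ∀ z : ↥(B.piece NE), 1 - 2*ε ≤ ‖(Polynomial.aeval T q) (ee z)‖^2 := by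
    intro z
    have h1 := hlo (ee z)
    have h2 : (inner ℝ (ee z) (T (ee z)) : ℝ) = KP z z := hinnerTe z z
    have h3 : 1 - ε ≤ KP z z := by simp only [hKPdef]; exact (hK0diag z.1).1
    rw [h2, henorm z] at h1
    linarith
  -- the test functions
  set φ : ↥(B.piece NE) → X → ℝ := fun z w =>
    if hw : w ∈ B.piece NE then ((Polynomial.aeval T q) (ee z) ⟨w, hw⟩)^2 else 0 with hφdef
  have hφsupp1 : ∀ z, Function.support (φ z) ⊆ B.piece NE := by
    intro z w hw
    by_contra hwP
    apply hw
    simp only [hφdef]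
    exact dif_neg hwP
  have hφsupp2 : ∀ z, Function.support (φ z) ⊆ Metric.closedBall z.1 S := by
    intro z w hw
    have hwP : w ∈ B.piece NE := hφsupp1 z hw
    rw [Metric.mem_closedBall]
    by_contra hd
    push_neg at hd
    apply hw
    have h0 : (D:ℝ)*r < dist w z.1 := by
      rw [hSdef] at hd
      linarith
    have h1 := hpropM z ⟨w, hwP⟩ h0
    simp only [hφdef]
    rw [dif_pos hwP, h1]
    norm_num
  -- Fintype instance for the edge set
  have hEfin : {p : X × X | p.1 ∈ B.piece NE ∧ p.2 ∈ B.piece NE ∧ dist p.1 p.2 ≤ R}.Finite :=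
    Set.Finite.subset ((B.finite NE).prod (B.finite NE)) (fun p hp => Set.mk_mem_prod hp.1 hp.2.1)
  haveI hEfint : Fintype {p : X × X // p.1 ∈ B.piece NE ∧ p.2 ∈ B.piece NE ∧ dist p.1 p.2 ≤ R} :=
    hEfin.fintype
  -- the weak expander inequality, per point
  have hkey : ∀ z : ↥(B.piece NE), c * (1 - 2*ε) ≤
      ∑ p : {pq : X × X // pq.1 ∈ B.piece NE ∧ pq.2 ∈ B.piece NE ∧ dist pq.1 pq.2 ≤ R},
        |φ z p.1.1 - φ z p.1.2| := by
    intro z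
    have h := hNe NE (le_refl NE) (φ z) (hφsupp1 z) ⟨z.1, hφsupp2 z⟩
    rw [tsum_fintype, tsum_fintype] at h
    have hLHS : ∑ x : ↥(B.piece NE), |φ z x.1| = ‖(Polynomial.aeval T q) (ee z)‖^2 := by
      rw [norm_sq_eq]
      apply Finset.sum_congr rfl
      intro x _
      simp only [hφdef]
      rw [dif_pos x.2, abs_of_nonneg (sq_nonneg _)]
    rw [hLHS] at h
    calc c * (1 - 2*ε) ≤ c * ‖(Polynomial.aeval T q) (ee z)‖^2 := by
          nlinarith [hmass z, hc]
      _ ≤ _ := h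
  -- per-edge estimate
  have hper : ∀ p : {pq : X × X // pq.1 ∈ B.piece NE ∧ pq.2 ∈ B.piece NE ∧ dist pq.1 pq.2 ≤ R},
      ∑ z : ↥(B.piece NE), |φ z p.1.1 - φ z p.1.2| ≤ 9 * Real.sqrt ε := by
    intro p
    set x : ↥(B.piece NE) := ⟨p.1.1, p.2.1⟩ with hxdef
    set y : ↥(B.piece NE) := ⟨p.1.2, p.2.2.1⟩ with hydef
    have hd : dist x.1 y.1 ≤ R := p.2.2.2
    set A := (Polynomial.aeval T q) (ee x) with hAdef
    set Bv := (Polynomial.aeval T q) (ee y) with hBdef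
    have hstep : ∀ z : ↥(B.piece NE), |φ z p.1.1 - φ z p.1.2|
        = |A z - Bv z| * |A z + Bv z| := by
      intro z
      have e1 : φ z p.1.1 = ((Polynomial.aeval T q) (ee z) x)^2 := by
        simp only [hφdef]; rw [dif_pos p.2.1]
      have e2 : φ z p.1.2 = ((Polynomial.aeval T q) (ee z) y)^2 := by
        simp only [hφdef]; rw [dif_pos p.2.2.1]
      rw [e1, e2, hMe_symm z x, hMe_symm z y, ← hAdef, ← hBdef]
      rw [show (A z)^2 - (Bv z)^2 = (A z - Bv z) * (A z + Bv z) by ring, abs_mul]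
    have hCS := Finset.sum_mul_sq_le_sq_mul_sq Finset.univ
      (fun z : ↥(B.piece NE) => |A z - Bv z|) (fun z => |A z + Bv z|)
    have hf : ∑ z : ↥(B.piece NE), |A z - Bv z|^2 ≤ 8*ε := by
      have h1 : ∑ z : ↥(B.piece NE), |A z - Bv z|^2 = ‖A - Bv‖^2 := by
        rw [norm_sq_eq]
        apply Finset.sum_congr rfl
        intro z _
        rw [sq_abs, PiLp.sub_apply]
      rw [h1, hAdef, hBdef]
      exact hedge1 x y hd
    have hg : ∑ z : ↥(B.piece NE), |A z + Bv z|^2 ≤ 9 := by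
      have h1 : ∑ z : ↥(B.piece NE), |A z + Bv z|^2 = ‖A + Bv‖^2 := by
        rw [norm_sq_eq]
        apply Finset.sum_congr rfl
        intro z _
        rw [sq_abs, PiLp.add_apply]
      rw [h1, hAdef, hBdef]
      exact hedge2 x y hd
    have hfg0 : 0 ≤ ∑ z : ↥(B.piece NE), |A z - Bv z| * |A z + Bv z| :=
      Finset.sum_nonneg (fun z _ => mul_nonneg (abs_nonneg _) (abs_nonneg _))
    have hf0 : (0:ℝ) ≤ ∑ z : ↥(B.piece NE), |A z - Bv z|^2 :=
      Finset.sum_nonneg (fun z _ => sq_nonneg _)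
    have hg0 : (0:ℝ) ≤ ∑ z : ↥(B.piece NE), |A z + Bv z|^2 :=
      Finset.sum_nonneg (fun z _ => sq_nonneg _)
    have h81 : (∑ z : ↥(B.piece NE), |A z - Bv z| * |A z + Bv z|)^2 ≤ 81 * ε := by
      nlinarith [hCS, hf, hg, hf0, hg0, hε.le]
    have hsq : (9 * Real.sqrt ε)^2 = 81 * ε := by
      rw [mul_pow, Real.sq_sqrt hε.le]; norm_num
    have hfinal : ∑ z : ↥(B.piece NE), |A z - Bv z| * |A z + Bv z| ≤ 9 * Real.sqrt ε := by
      nlinarith [h81, hsq, hfg0, Real.sqrt_nonneg ε]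
    calc ∑ z : ↥(B.piece NE), |φ z p.1.1 - φ z p.1.2|
        = ∑ z : ↥(B.piece NE), |A z - Bv z| * |A z + Bv z| :=
          Finset.sum_congr rfl (fun z _ => hstep z)
      _ ≤ 9 * Real.sqrt ε := hfinal
  -- cardinality of the edge set
  have hcardE : (Fintype.card
      {pq : X × X // pq.1 ∈ B.piece NE ∧ pq.2 ∈ B.piece NE ∧ dist pq.1 pq.2 ≤ R} : ℝ)
      ≤ (Fintype.card ↥(B.piece NE) : ℝ) * MR := by
    set J : {pq : X × X // pq.1 ∈ B.piece NE ∧ pq.2 ∈ B.piece NE ∧ dist pq.1 pq.2 ≤ R}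
        → ↥(B.piece NE) × ↥(B.piece NE) :=
      fun p => (⟨p.1.1, p.2.1⟩, ⟨p.1.2, p.2.2.1⟩) with hJdef
    have hinj : Function.Injective J := by
      intro p1 p2 h
      apply Subtype.ext
      have h1 : (J p1).1.1 = (J p2).1.1 := by rw [h]
      have h2 : (J p1).2.1 = (J p2).2.1 := by rw [h]
      exact Prod.ext h1 h2
    set AF : Finset (↥(B.piece NE) × ↥(B.piece NE)) :=
      Finset.univ.filter (fun pp => dist pp.1.1 pp.2.1 ≤ R) with hAFdef
    have hcard1 : Fintype.card
        {pq : X × X // pq.1 ∈ B.piece NE ∧ pq.2 ∈ B.piece NE ∧ dist pq.1 pq.2 ≤ R}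
        ≤ AF.card := by
      have himage : Finset.univ.image J ⊆ AF := by
        intro pp hpp
        simp only [Finset.mem_image] at hpp
        obtain ⟨p, _, rfl⟩ := hpp
        rw [hAFdef]
        simp only [Finset.mem_filter]
        exact ⟨Finset.mem_univ _, p.2.2.2⟩
      calc Fintype.card _ = (Finset.univ.image J).card := by
            rw [Finset.card_image_of_injective _ hinj, Finset.card_univ]
        _ ≤ AF.card := Finset.card_le_card himage
    have hcard2 : AF.card ≤ Fintype.card ↥(B.piece NE) * MR := by
      rw [hAFdef]
      rw [Finset.card_eq_sum_card_fiberwise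
        (f := Prod.fst) (t := Finset.univ) (fun pp _ => Finset.mem_univ pp.1)]
      have hfib : ∀ x : ↥(B.piece NE),
          ((Finset.univ.filter (fun pp : ↥(B.piece NE) × ↥(B.piece NE) =>
            dist pp.1.1 pp.2.1 ≤ R)).filter (fun pp => pp.1 = x)).card ≤ MR := by
        intro x
        have hsub : ((Finset.univ.filter (fun pp : ↥(B.piece NE) × ↥(B.piece NE) =>
            dist pp.1.1 pp.2.1 ≤ R)).filter (fun pp => pp.1 = x)).card
            ≤ (Finset.univ.filter (fun y : ↥(B.piece NE) => dist x.1 y.1 ≤ R)).card := by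
          apply Finset.card_le_card_of_injOn Prod.snd
          · intro pp hpp
            simp only [Finset.mem_coe, Finset.mem_filter, Finset.mem_univ, true_and] at hpp ⊢
            obtain ⟨hdd, hfst⟩ := hpp
            rw [← hfst]
            exact hdd
          · intro a ha b hb hab
            simp only [Finset.mem_coe, Finset.mem_filter] at ha hb
            have : a.1 = b.1 := by rw [ha.2, hb.2]
            exact Prod.ext this hab
        exact le_trans hsub (hcount x.1 R MR hMR)
      calc ∑ x : ↥(B.piece NE), ((Finset.univ.filter
            (fun pp : ↥(B.piece NE) × ↥(B.piece NE) => dist pp.1.1 pp.2.1 ≤ R)).filter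
              (fun pp => pp.1 = x)).card
          ≤ ∑ _x : ↥(B.piece NE), MR := Finset.sum_le_sum (fun x _ => hfib x)
        _ = Fintype.card ↥(B.piece NE) * MR := by
          rw [Finset.sum_const, Finset.card_univ, smul_eq_mul]
    calc (Fintype.card
        {pq : X × X // pq.1 ∈ B.piece NE ∧ pq.2 ∈ B.piece NE ∧ dist pq.1 pq.2 ≤ R} : ℝ)
        ≤ (AF.card : ℝ) := by exact_mod_cast hcard1
      _ ≤ (Fintype.card ↥(B.piece NE) : ℝ) * MR := by exact_mod_cast hcard2
  -- summation over z and the contradiction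
  have hC0 : (0:ℝ) < (Fintype.card ↥(B.piece NE) : ℝ) := by
    exact_mod_cast Fintype.card_pos
  have hmain : (Fintype.card ↥(B.piece NE) : ℝ) * (c * (1 - 2*ε))
      ≤ 9 * Real.sqrt ε * ((Fintype.card ↥(B.piece NE) : ℝ) * MR) := by
    calc (Fintype.card ↥(B.piece NE) : ℝ) * (c * (1 - 2*ε))
        = ∑ _z : ↥(B.piece NE), c * (1 - 2*ε) := by
          rw [Finset.sum_const, Finset.card_univ, nsmul_eq_mul]
      _ ≤ ∑ z : ↥(B.piece NE),
          ∑ p : {pq : X × X // pq.1 ∈ B.piece NE ∧ pq.2 ∈ B.piece NE ∧ dist pq.1 pq.2 ≤ R},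
            |φ z p.1.1 - φ z p.1.2| := Finset.sum_le_sum (fun z _ => hkey z)
      _ = ∑ p : {pq : X × X // pq.1 ∈ B.piece NE ∧ pq.2 ∈ B.piece NE ∧ dist pq.1 pq.2 ≤ R},
          ∑ z : ↥(B.piece NE), |φ z p.1.1 - φ z p.1.2| := Finset.sum_comm
      _ ≤ ∑ _p : {pq : X × X // pq.1 ∈ B.piece NE ∧ pq.2 ∈ B.piece NE ∧ dist pq.1 pq.2 ≤ R},
          9 * Real.sqrt ε := Finset.sum_le_sum (fun p _ => hper p)
      _ = (Fintype.card
          {pq : X × X // pq.1 ∈ B.piece NE ∧ pq.2 ∈ B.piece NE ∧ dist pq.1 pq.2 ≤ R} : ℝ)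
            * (9 * Real.sqrt ε) := by
          rw [Finset.sum_const, Finset.card_univ, nsmul_eq_mul]
      _ ≤ 9 * Real.sqrt ε * ((Fintype.card ↥(B.piece NE) : ℝ) * MR) := by
          have h9 : (0:ℝ) ≤ 9 * Real.sqrt ε := by positivity
          nlinarith [hcardE, h9, Real.sqrt_nonneg ε]
  have hdiv : c * (1 - 2*ε) ≤ 9 * Real.sqrt ε * MR := by
    have h1 : (Fintype.card ↥(B.piece NE) : ℝ) * (c * (1 - 2*ε))
        ≤ (Fintype.card ↥(B.piece NE) : ℝ) * (9 * Real.sqrt ε * MR) := by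
      calc (Fintype.card ↥(B.piece NE) : ℝ) * (c * (1 - 2*ε))
          ≤ 9 * Real.sqrt ε * ((Fintype.card ↥(B.piece NE) : ℝ) * MR) := hmain
        _ = (Fintype.card ↥(B.piece NE) : ℝ) * (9 * Real.sqrt ε * MR) := by ring
    exact le_of_mul_le_mul_left h1 hC0
  -- final numeric contradiction
  have hhalf : (1:ℝ)/2 ≤ 1 - 2*ε := by linarith
  have hMR0 : (0:ℝ) ≤ (MR:ℝ) := Nat.cast_nonneg MR
  have hA1 : c * (1/2) ≤ 9 * (c / (20 * ((MR:ℝ)+1))) * MR := by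
    calc c * (1/2) ≤ c * (1 - 2*ε) := by nlinarith [hc]
      _ ≤ 9 * Real.sqrt ε * MR := hdiv
      _ ≤ 9 * (c / (20 * ((MR:ℝ)+1))) * MR := by
          nlinarith [hsqε, hMR0, Real.sqrt_nonneg ε]
  have hA2 : (9 * (c / (20 * ((MR:ℝ)+1))) * MR) * (20 * ((MR:ℝ)+1)) = 9 * c * MR := by
    field_simp
  have hA3 := mul_le_mul_of_nonneg_right hA1 hMR1.le
  rw [hA2] at hA3
  nlinarith [mul_nonneg hc.le hMR0, hc, hMR0]
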